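/- For all positive integers r and m, the homogeneous equation y² + z² + w² = 2rm·((4m+1)t² - x²) has a nontrivial solution in integers x, y, z, w, t. -/

import Mathlib

/-
We prove the theorem via (a large fragment of) Legendre's three-square theorem:
every `2^ε * n'` with `n' ≡ 1 [MOD 8]`, `ε ≤ 1`, is a sum of three integer squares.
This is proven by constructing a positive definite unimodular ternary quadratic
form representing it (using a Dirichlet prime `p ≡ 2n'-1 [MOD 8n']` and quadratic
reciprocity), and showing by reduction theory that any such form is equivalent
to the sum of three squares.
-/

namespace ThreeSq

def Q3 (a b c p q r x y z : ℤ) : ℤ := a*x^2 + b*y^2 + c*z^2 + 2*(p*x*y + q*x*z + r*y*z)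
def Q2 (A B R y z : ℤ) : ℤ := A*y^2 + B*z^2 + 2*R*y*z
def d3 (a b c p q r : ℤ) : ℤ := a*b*c + 2*p*q*r - a*r^2 - b*q^2 - c*p^2
def B3 (a b c p q r x1 y1 z1 x2 y2 z2 : ℤ) : ℤ :=
  a*x1*x2 + b*y1*y2 + c*z1*z2 + p*(x1*y2 + x2*y1) + q*(x1*z2 + x2*z1) + r*(y1*z2 + y2*z1)

section comp
variable (a b c p q r u11 u12 u13 u21 u22 u23 u31 u32 u33 x y z : ℤ)

lemma comp_value :
    Q3 (B3 a b c p q r u11 u21 u31 u11 u21 u31)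
       (B3 a b c p q r u12 u22 u32 u12 u22 u32)
       (B3 a b c p q r u13 u23 u33 u13 u23 u33)
       (B3 a b c p q r u11 u21 u31 u12 u22 u32)
       (B3 a b c p q r u11 u21 u31 u13 u23 u33)
       (B3 a b c p q r u12 u22 u32 u13 u23 u33) x y z
    = Q3 a b c p q r (u11*x + u12*y + u13*z) (u21*x + u22*y + u23*z) (u31*x + u32*y + u33*z) := by
  simp only [Q3, B3]; ring

lemma comp_det :
    d3 (B3 a b c p q r u11 u21 u31 u11 u21 u31)
       (B3 a b c p q r u12 u22 u32 u12 u22 u32)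
       (B3 a b c p q r u13 u23 u33 u13 u23 u33)
       (B3 a b c p q r u11 u21 u31 u12 u22 u32)
       (B3 a b c p q r u11 u21 u31 u13 u23 u33)
       (B3 a b c p q r u12 u22 u32 u13 u23 u33)
    = (u11*(u22*u33 - u23*u32) - u12*(u21*u33 - u23*u31) + u13*(u21*u32 - u22*u31))^2
      * d3 a b c p q r := by
  simp only [d3, B3]; ring

end comp

/-- completing the square identity -/
lemma id1 (a b c p q r x y z : ℤ) :
    a * Q3 a b c p q r x y z
      = (a*x + p*y + q*z)^2 + Q2 (a*b - p^2) (a*c - q^2) (a*r - p*q) y z := by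
  unfold Q3 Q2; ring

lemma id2 (a b c p q r : ℤ) :
    (a*b - p^2)*(a*c - q^2) - (a*r - p*q)^2 = a * d3 a b c p q r := by
  unfold d3; ring

lemma pos2' {A B R : ℤ} (hA : 0 < A) (hD : 0 < A*B - R^2) {y z : ℤ}
    (h : ¬(y = 0 ∧ z = 0)) : 0 < Q2 A B R y z := by
  have key : A * Q2 A B R y z = (A*y + R*z)^2 + (A*B - R^2) * z^2 := by unfold Q2; ring
  rcases eq_or_ne z 0 with hz | hz
  · have hy : y ≠ 0 := fun hy => h ⟨hy, hz⟩
    have h1 : Q2 A B R y z = A * y^2 := by rw [hz]; unfold Q2; ring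
    rw [h1]; positivity
  · nlinarith [sq_nonneg (A*y + R*z), sq_pos_of_ne_zero hz]

lemma pos3 {a b c p q r : ℤ} (ha : 0 < a) (hm : 0 < a*b - p^2) (hd : 0 < d3 a b c p q r)
    {x y z : ℤ} (h : ¬(x = 0 ∧ y = 0 ∧ z = 0)) : 0 < Q3 a b c p q r x y z := by
  rcases Classical.em (y = 0 ∧ z = 0) with ⟨hy, hz⟩ | hyz
  · have hx : x ≠ 0 := fun hx => h ⟨hx, hy, hz⟩
    have : Q3 a b c p q r x y z = a * x^2 := by rw [hy, hz]; unfold Q3; ring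
    rw [this]; positivity
  · have hC : 0 < Q2 (a*b - p^2) (a*c - q^2) (a*r - p*q) y z := by
      apply pos2' hm _ hyz
      rw [id2]; positivity
    nlinarith [id1 a b c p q r x y z, sq_nonneg (a*x + p*y + q*z)]

/-- extend a primitive vector to a matrix of determinant 1 (column convention) -/
lemma ext3 (x y z : ℤ) (h : Int.gcd (Int.gcd x y) z = 1) :
    ∃ u12 u13 u22 u23 u32 u33 : ℤ,
      x*(u22*u33 - u23*u32) - u12*(y*u33 - u23*z) + u13*(y*u32 - u22*z) = 1 := by
  rcases Nat.eq_zero_or_pos (Int.gcd y z) with hg2 | hg2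
  · rw [Int.gcd_eq_zero_iff] at hg2
    obtain ⟨hy, hz⟩ := hg2
    subst hy; subst hz
    simp only [Int.gcd_zero_right] at h
    have hna : x.natAbs = 1 := by simpa [Int.gcd, Int.natAbs_abs] using h
    have hx2 : x^2 = 1 := by
      rw [← Int.natAbs_sq, hna]; norm_num
    exact ⟨0, 0, 1, 0, 0, x, by linear_combination hx2⟩
  · set G2 : ℤ := (Int.gcd y z : ℤ) with hG2
    have hG2pos : 0 < G2 := by rw [hG2]; exact_mod_cast hg2
    set Y' := y / G2 with hY'
    set Z' := z / G2 with hZ'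
    have hy : y = G2 * Y' := by
      rw [hY', Int.mul_ediv_cancel' (Int.gcd_dvd_left _ _)]
    have hz : z = G2 * Z' := by
      rw [hZ', Int.mul_ediv_cancel' (Int.gcd_dvd_right _ _)]
    have hprim : Int.gcd Y' Z' = 1 := Int.gcd_div_gcd_div_gcd hg2
    have hst : Y' * Int.gcdA Y' Z' + Z' * Int.gcdB Y' Z' = 1 := by
      have := Int.gcd_eq_gcd_ab Y' Z'
      rw [hprim] at this
      exact_mod_cast this.symm
    have hxg : Int.gcd x G2 = 1 := by
      have : Int.gcd (Int.gcd x y) z = Int.gcd x (Int.gcd y z : ℤ) := Int.gcd_assoc x y z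
      rw [this] at h
      simpa [hG2] using h
    have hbez : x * Int.gcdA x G2 + G2 * Int.gcdB x G2 = 1 := by
      have := Int.gcd_eq_gcd_ab x G2
      rw [hxg] at this
      exact_mod_cast this.symm
    set s := Int.gcdA Y' Z'
    set t := Int.gcdB Y' Z'
    set u := Int.gcdA x G2
    set v := Int.gcdB x G2
    refine ⟨-v, 0, u*Y', -t, u*Z', s, ?_⟩
    have expand : x*((u*Y')*s - (-t)*(u*Z')) - (-v)*(y*s - (-t)*z) + 0*(y*(u*Z') - (u*Y')*z)
        = (x*u)*(Y'*s + Z'*t) + v*(y*s + z*t) := by ring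
    rw [expand, hy, hz]
    have : G2*Y'*s + G2*Z'*t = G2*(Y'*s + Z'*t) := by ring
    rw [this, hst, mul_one]
    linarith [hbez]


lemma exists_shift (A s : ℤ) (hA : 0 < A) : ∃ k, 2 * |s - A*k| ≤ A := by
  rcases le_or_gt (2 * (s % A)) A with h | h
  · refine ⟨s / A, ?_⟩
    have h1 : s - A * (s / A) = s % A := by
      have := Int.emod_add_mul_ediv s A
      linarith
    rw [h1, abs_of_nonneg (Int.emod_nonneg s (ne_of_gt hA))]
    exact h
  · refine ⟨s / A + 1, ?_⟩
    have h1 : s - A * (s / A + 1) = s % A - A := by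
      have := Int.emod_add_mul_ediv s A
      linarith
    have h2 : s % A < A := Int.emod_lt_of_pos s hA
    rw [h1, abs_of_nonpos (by linarith)]
    linarith

lemma bin_min : ∀ (k : ℕ) (A B R : ℤ), A.toNat = k → 0 < A → 0 < A*B - R^2 →
    ∃ y z : ℤ, ¬(y = 0 ∧ z = 0) ∧ 3 * (Q2 A B R y z)^2 ≤ 4*(A*B - R^2) := by
  intro k
  induction k using Nat.strong_induction_on with
  | _ k ih =>
    intro A B R hk hA hD
    obtain ⟨sh, hsh⟩ := exists_shift A R hA
    set R' := R - A * sh with hR'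
    set B' := B + A * sh^2 - 2*R*sh with hB'
    have hval : ∀ y z : ℤ, Q2 A B' R' y z = Q2 A B R (y - sh*z) z := by
      intro y z; unfold Q2; rw [hB', hR']; ring
    have hdet : A*B' - R'^2 = A*B - R^2 := by rw [hB', hR']; ring
    have h4R : 4 * R'^2 ≤ A^2 := by
      have := abs_nonneg R'
      nlinarith [sq_abs R']
    by_cases hBA : B' < A
    · have hB'pos : 0 < B' := by nlinarith [sq_nonneg R']
      have hlt : B'.toNat < k := by omega
      obtain ⟨y, z, hyz, hb⟩ := ih B'.toNat hlt B' A R' rfl hB'pos (by nlinarith)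
      refine ⟨z - sh*y, y, ?_, ?_⟩
      · rintro ⟨h1, h2⟩
        apply hyz
        refine ⟨h2, ?_⟩
        rw [h2, mul_zero, sub_zero] at h1
        exact h1
      · have : Q2 B' A R' y z = Q2 A B R (z - sh*y) y := by
          rw [← hval z y]; unfold Q2; ring
        rw [← this, hdet.symm]
        calc 3 * Q2 B' A R' y z ^ 2 ≤ 4 * (B'*A - R'^2) := hb
        _ = 4 * (A*B' - R'^2) := by ring
    · push_neg at hBA
      refine ⟨1, 0, by simp, ?_⟩
      have hv : Q2 A B R 1 0 = A := by unfold Q2; ring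
      rw [hv, ← hdet]
      nlinarith

lemma bin_one : ∀ (k : ℕ) (A B R : ℤ), A.toNat = k → 0 < A → A*B - R^2 = 1 →
    ∀ y z : ℤ, ∃ u v : ℤ, u^2 + v^2 = Q2 A B R y z := by
  intro k
  induction k using Nat.strong_induction_on with
  | _ k ih =>
    intro A B R hk hA hD y z
    obtain ⟨sh, hsh⟩ := exists_shift A R hA
    set R' := R - A * sh with hR'
    set B' := B + A * sh^2 - 2*R*sh with hB'
    have hval : Q2 A B' R' (y + sh*z) z = Q2 A B R y z := by
      unfold Q2; rw [hB', hR']; ring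
    have hdet : A*B' - R'^2 = 1 := by rw [hB', hR']; linarith [hD]; 
    have h4R : 4 * R'^2 ≤ A^2 := by
      have := abs_nonneg R'
      nlinarith [sq_abs R']
    by_cases hBA : B' < A
    · have hB'pos : 0 < B' := by nlinarith [sq_nonneg R']
      have hlt : B'.toNat < k := by omega
      have hswap : Q2 B' A R' z (y + sh*z) = Q2 A B' R' (y + sh*z) z := by unfold Q2; ring
      obtain ⟨u, v, huv⟩ := ih B'.toNat hlt B' A R' rfl hB'pos (by linarith [hdet]) z (y + sh*z)
      exact ⟨u, v, by rw [huv, hswap, hval]⟩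
    · push_neg at hBA
      have hA1 : A = 1 := by nlinarith
      have hR0 : R' = 0 := by nlinarith [sq_nonneg R']
      have hB1 : B' = 1 := by
        rw [hA1, hR0] at hdet; linarith
      refine ⟨y + sh*z, z, ?_⟩
      rw [← hval, hA1, hR0, hB1]; unfold Q2; ring


lemma B3_diag (a b c p q r x y z : ℤ) : B3 a b c p q r x y z x y z = Q3 a b c p q r x y z := by
  unfold B3 Q3; ring

set_option maxHeartbeats 2000000 in
theorem main3 : ∀ (k : ℕ) (a b c p q r : ℤ), a.toNat = k → 0 < a → 0 < a*b - p^2 →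
    d3 a b c p q r = 1 →
    ∀ x y z : ℤ, ∃ X Y Z : ℤ, X^2 + Y^2 + Z^2 = Q3 a b c p q r x y z := by
  intro k
  induction k using Nat.strong_induction_on with
  | _ k ih =>
    intro a b c p q r hk ha hm hd x y z
    by_cases ha1 : a = 1
    · subst ha1
      have h1 := id1 1 b c p q r x y z
      rw [one_mul] at h1
      have hdet2 : (1*b - p^2)*(1*c - q^2) - (1*r - p*q)^2 = 1 := by
        rw [id2, hd]; ring
      obtain ⟨u, v, huv⟩ := bin_one (1*b - p^2).toNat (1*b - p^2) (1*c - q^2) (1*r - p*q)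
        rfl (by simpa using hm) hdet2 y z
      exact ⟨x + p*y + q*z, u, v, by rw [h1, ← huv]; ring⟩
    · have ha2 : 2 ≤ a := by omega
      have hdetC : (a*b - p^2)*(a*c - q^2) - (a*r - p*q)^2 = a := by rw [id2, hd]; ring
      obtain ⟨y0, z0, hyz0, hbound⟩ := bin_min (a*b - p^2).toNat (a*b - p^2) (a*c - q^2)
        (a*r - p*q) rfl hm (by rw [hdetC]; omega)
      set VC := Q2 (a*b - p^2) (a*c - q^2) (a*r - p*q) y0 z0 with hVC
      have hVCpos : 0 < VC := pos2' hm (by rw [hdetC]; omega) hyz0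
      rw [hdetC] at hbound
      obtain ⟨k0, hk0⟩ := exists_shift a (p*y0 + q*z0) ha
      set x0 := -k0 with hx0
      set t := a*x0 + (p*y0 + q*z0) with ht
      have htabs : 2 * |t| ≤ a := by
        have htt : t = (p*y0 + q*z0) - a*k0 := by rw [ht, hx0]; ring
        rw [htt]; exact hk0
      have ht2 : 4 * t^2 ≤ a^2 := by nlinarith only [htabs, sq_abs t, abs_nonneg t, ha]
      set qs := Q3 a b c p q r x0 y0 z0 with hqs
      have hid : a * qs = t^2 + VC := by
        rw [hqs, hVC, ht]; linear_combination id1 a b c p q r x0 y0 z0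
      have hqspos : 0 < qs := by nlinarith only [hid, sq_nonneg t, hVCpos, ha]
      have hqslt : qs < a := by
        by_contra hcon
        push_neg at hcon
        have h8 : a*a ≤ a*qs := by nlinarith only [ha2, hcon]
        have h9 : 3*a^2 ≤ 4*VC := by nlinarith only [h8, hid, ht2]
        have h10 : 9*a^4 ≤ 16*VC^2 := by nlinarith only [h9, hVCpos]
        have h11 : 27*a^4 ≤ 64*a := by linarith only [h10, hbound]
        have h12a : 4 ≤ a^2 := by nlinarith only [ha2]
        have h12 : 8 ≤ a^3 := by nlinarith only [ha2, h12a]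
        have h13 : 216*a ≤ 27*a^4 := by nlinarith only [h12, ha2]
        linarith only [h11, h13, ha2]
      -- primitive part
      set g : ℕ := Int.gcd (Int.gcd x0 y0) z0 with hg
      have hgpos : 0 < g := by
        rcases Nat.eq_zero_or_pos g with h | h
        · exfalso
          rw [hg] at h
          have h' := Int.gcd_eq_zero_iff.mp h
          have h'1 : Int.gcd x0 y0 = 0 := by exact_mod_cast h'.1
          have h'' := Int.gcd_eq_zero_iff.mp h'1
          exact hyz0 ⟨h''.2, h'.2⟩
        · exact h
      set G : ℤ := (g : ℤ) with hG
      have hGpos : 0 < G := by rw [hG]; exact_mod_cast hgpos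
      have hdx : G ∣ x0 := by
        rw [hG, hg]; exact dvd_trans (Int.gcd_dvd_left _ _) (Int.gcd_dvd_left _ _)
      have hdy : G ∣ y0 := by
        rw [hG, hg]; exact dvd_trans (Int.gcd_dvd_left _ _) (Int.gcd_dvd_right _ _)
      have hdz : G ∣ z0 := by
        rw [hG, hg]; exact Int.gcd_dvd_right _ _
      obtain ⟨X1, hX1⟩ := hdx
      obtain ⟨Y1, hY1⟩ := hdy
      obtain ⟨Z1, hZ1⟩ := hdz
      have hprim : Int.gcd (Int.gcd X1 Y1) Z1 = 1 := by
        set d : ℕ := Int.gcd (Int.gcd X1 Y1) Z1 with hd'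
        have hddx : (d:ℤ) ∣ X1 := by
          rw [hd']; exact dvd_trans (Int.gcd_dvd_left _ _) (Int.gcd_dvd_left _ _)
        have hddy : (d:ℤ) ∣ Y1 := by
          rw [hd']; exact dvd_trans (Int.gcd_dvd_left _ _) (Int.gcd_dvd_right _ _)
        have hddz : (d:ℤ) ∣ Z1 := by
          rw [hd']; exact Int.gcd_dvd_right _ _
        have h1 : G*(d:ℤ) ∣ x0 := by rw [hX1]; exact mul_dvd_mul_left G hddx
        have h2 : G*(d:ℤ) ∣ y0 := by rw [hY1]; exact mul_dvd_mul_left G hddy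
        have h3 : G*(d:ℤ) ∣ z0 := by rw [hZ1]; exact mul_dvd_mul_left G hddz
        have h4 : G*(d:ℤ) ∣ G := by
          rw [hG, hg]
          exact Int.dvd_coe_gcd (Int.dvd_coe_gcd h1 h2) h3
        have h4' : G*(d:ℤ) ∣ G*1 := by rwa [mul_one]
        have h5 : (d:ℤ) ∣ 1 := (mul_dvd_mul_iff_left (a := G) (ne_of_gt hGpos)).mp h4'
        have h6 : d ∣ 1 := by exact_mod_cast h5
        exact Nat.dvd_one.mp h6
      -- value of primitive vector
      set q' := Q3 a b c p q r X1 Y1 Z1 with hq'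
      have hscale : qs = G^2 * q' := by
        rw [hqs, hq', hX1, hY1, hZ1]; unfold Q3; ring
      have hw1nz : ¬(X1 = 0 ∧ Y1 = 0 ∧ Z1 = 0) := by
        rintro ⟨e1, e2, e3⟩
        rw [e2] at hY1; rw [e3] at hZ1
        exact hyz0 ⟨by rw [hY1]; ring, by rw [hZ1]; ring⟩
      have hq'pos : 0 < q' := pos3 ha hm (by rw [hd]; norm_num) hw1nz
      have hq'lt : q' < a := by
        have hG2 : 1 ≤ G^2 := by nlinarith only [hGpos]
        have h7 : q' ≤ qs := by nlinarith only [hscale, hG2, hq'pos]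
        linarith only [h7, hqslt]
      -- extend to unimodular matrix with first column (X1, Y1, Z1)
      obtain ⟨u12, u13, u22, u23, u32, u33, hdetU⟩ := ext3 X1 Y1 Z1 hprim
      -- composed form F' (first column X1 Y1 Z1)
      set a' := B3 a b c p q r X1 Y1 Z1 X1 Y1 Z1 with ha'
      set b' := B3 a b c p q r u12 u22 u32 u12 u22 u32 with hb'
      set c' := B3 a b c p q r u13 u23 u33 u13 u23 u33 with hc'
      set p' := B3 a b c p q r X1 Y1 Z1 u12 u22 u32 with hp'
      set q'' := B3 a b c p q r X1 Y1 Z1 u13 u23 u33 with hq''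
      set r' := B3 a b c p q r u12 u22 u32 u13 u23 u33 with hr'
      have hvalue : ∀ U V W : ℤ, Q3 a' b' c' p' q'' r' U V W
          = Q3 a b c p q r (X1*U + u12*V + u13*W) (Y1*U + u22*V + u23*W) (Z1*U + u32*V + u33*W) := by
        intro U V W
        rw [ha', hb', hc', hp', hq'', hr']
        exact comp_value a b c p q r X1 u12 u13 Y1 u22 u23 Z1 u32 u33 U V W
      have ha'q : a' = q' := by rw [ha', B3_diag, hq']
      have hd3' : d3 a' b' c' p' q'' r' = 1 := by
        rw [ha', hb', hc', hp', hq'', hr', comp_det, hdetU, hd]; ring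
      -- second minor positivity
      have hm' : 0 < a'*b' - p'^2 := by
        have hval2 : a' * Q3 a' b' c' p' q'' r' (-p') a' 0 = (a'*b' - p'^2) * a'^2 := by
          rw [id1]
          unfold Q2; ring
        have hvec : Q3 a' b' c' p' q'' r' (-p') a' 0
            = Q3 a b c p q r (X1*(-p') + u12*a' + u13*0) (Y1*(-p') + u22*a' + u23*0)
                (Z1*(-p') + u32*a' + u33*0) := hvalue (-p') a' 0
        have hnz : ¬(X1*(-p') + u12*a' + u13*0 = 0 ∧ Y1*(-p') + u22*a' + u23*0 = 0
            ∧ Z1*(-p') + u32*a' + u33*0 = 0) := by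
          rintro ⟨e1, e2, e3⟩
          -- recover a' = 0 via adjugate row
          have hrec : (u22*u33 - u23*u32)*(X1*(-p') + u12*a' + u13*0)
              - (u12*u33 - u13*u32)*(Y1*(-p') + u22*a' + u23*0)
              + (u12*u23 - u13*u22)*(Z1*(-p') + u32*a' + u33*0)
              = (X1*(u22*u33 - u23*u32) - u12*(Y1*u33 - u23*Z1) + u13*(Y1*u32 - u22*Z1)) * (-p') := by
            ring
          rw [e1, e2, e3, hdetU] at hrec
          have hp'0 : -p' = 0 := by linarith [hrec]
          -- also second adjugate row gives a' = 0
          have hrec3 : -((Y1*u33 - u23*Z1))*(X1*(-p') + u12*a' + u13*0)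
              + (X1*u33 - u13*Z1)*(Y1*(-p') + u22*a' + u23*0)
              - (X1*u23 - u13*Y1)*(Z1*(-p') + u32*a' + u33*0)
              = (X1*(u22*u33 - u23*u32) - u12*(Y1*u33 - u23*Z1) + u13*(Y1*u32 - u22*Z1)) * a' := by
            ring
          rw [e1, e2, e3, hdetU] at hrec3
          have : a' = 0 := by linarith [hrec3]
          rw [ha'q] at this; omega
        have hpos := pos3 ha hm (by rw [hd]; norm_num) hnz
        rw [← hvec] at hpos
        have ha'pos : 0 < a' := by rw [ha'q]; exact hq'pos
        nlinarith only [hval2, hpos, ha'pos]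
      -- transport the represented value: use vector e1 to get q' represented... 
      -- solve U * w = (x,y,z) via adjugate (det = 1)
      set w1 := (u22*u33 - u23*u32)*x - (u12*u33 - u13*u32)*y + (u12*u23 - u13*u22)*z with hw1
      set w2 := -(Y1*u33 - u23*Z1)*x + (X1*u33 - u13*Z1)*y - (X1*u23 - u13*Y1)*z with hw2
      set w3 := (Y1*u32 - u22*Z1)*x - (X1*u32 - u12*Z1)*y + (X1*u22 - u12*Y1)*z with hw3
      have hsolve1 : X1*w1 + u12*w2 + u13*w3
          = (X1*(u22*u33 - u23*u32) - u12*(Y1*u33 - u23*Z1) + u13*(Y1*u32 - u22*Z1)) * x := by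
        rw [hw1, hw2, hw3]; ring
      have hsolve2 : Y1*w1 + u22*w2 + u23*w3
          = (X1*(u22*u33 - u23*u32) - u12*(Y1*u33 - u23*Z1) + u13*(Y1*u32 - u22*Z1)) * y := by
        rw [hw1, hw2, hw3]; ring
      have hsolve3 : Z1*w1 + u32*w2 + u33*w3
          = (X1*(u22*u33 - u23*u32) - u12*(Y1*u33 - u23*Z1) + u13*(Y1*u32 - u22*Z1)) * z := by
        rw [hw1, hw2, hw3]; ring
      rw [hdetU, one_mul] at hsolve1 hsolve2 hsolve3
      have htrans : Q3 a' b' c' p' q'' r' w1 w2 w3 = Q3 a b c p q r x y z := by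
        rw [hvalue w1 w2 w3, hsolve1, hsolve2, hsolve3]
      have hlt : q'.toNat < k := by omega
      obtain ⟨X, Y, Z, hXYZ⟩ := ih q'.toNat hlt a' b' c' p' q'' r'
        (by rw [ha'q]) (by rw [ha'q]; exact hq'pos) hm' hd3' w1 w2 w3
      exact ⟨X, Y, Z, by rw [hXYZ, htrans]⟩


theorem core (n' : ℕ) (h8 : n' % 8 = 1) (ε : ℕ) (hε : ε ≤ 1) :
    ∃ X Y Z : ℤ, X^2 + Y^2 + Z^2 = 2^ε * (n' : ℤ) := by
  by_cases h1 : n' = 1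
  · subst h1
    interval_cases ε
    · exact ⟨1, 0, 0, by norm_num⟩
    · exact ⟨1, 1, 0, by norm_num⟩
  · have hn9 : 9 ≤ n' := by omega
    set M := 8 * n' with hM
    haveI : NeZero M := ⟨by omega⟩
    set cc := 2 * n' - 1 with hcc
    have hcop : Nat.Coprime cc M := by
      have hc1 : Nat.Coprime cc n' := by
        have hd3 : Nat.gcd cc n' ∣ 2*n' - cc :=
          Nat.dvd_sub (Dvd.dvd.mul_left (Nat.gcd_dvd_right _ _) 2) (Nat.gcd_dvd_left _ _)
        have he : 2*n' - cc = 1 := by omega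
        rw [he] at hd3
        exact Nat.dvd_one.mp hd3
      have hc2 : Nat.Coprime cc 8 := by
        have h2 : Nat.Coprime cc 2 := Odd.coprime_two_right (by rw [Nat.odd_iff]; omega)
        have := Nat.Coprime.pow_right 3 h2
        norm_num at this
        exact this
      rw [hM]
      exact Nat.Coprime.mul_right hc2 hc1
    have hUnit : IsUnit ((cc : ℕ) : ZMod M) := (ZMod.isUnit_iff_coprime cc M).mpr hcop
    obtain ⟨P, hPgt, hPprime, hPmod⟩ := Nat.forall_exists_prime_gt_and_eq_mod hUnit M
    haveI : Fact P.Prime := ⟨hPprime⟩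
    have hmod : P ≡ cc [MOD M] := (ZMod.natCast_eq_natCast_iff P cc M).mp hPmod
    have hP8 : P % 8 = 1 := by
      have h := Nat.ModEq.of_dvd (Dvd.intro n' rfl) hmod
      unfold Nat.ModEq at h
      omega
    have hP4 : P % 4 = 1 := by omega
    have hPodd : Odd P := by rw [Nat.odd_iff]; omega
    -- p + 1 divisible by 2 n'
    have hmodM : P % M = cc % M := hmod
    have hdvd2n : 2 * n' ∣ P + 1 := by
      have hPM : P % M = cc := by
        have : cc % M = cc := Nat.mod_eq_of_lt (by omega)
        omega
      have hPeq : P + 1 = M * (P / M) + (cc + 1) := by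
        have := Nat.mod_add_div P M
        omega
      have hcc1 : cc + 1 = 2 * n' := by omega
      rw [hPeq, hcc1, hM]
      exact Dvd.dvd.add ⟨4 * (P / M), by ring⟩ dvd_rfl
    have hdvdn : (n' : ℕ) ∣ P + 1 := dvd_trans (dvd_mul_left n' 2) hdvd2n
    -- Jacobi symbol computations
    have hJP : ((P : ℤ)) % ((n' : ℕ) : ℤ) = ((-1 : ℤ)) % ((n' : ℕ) : ℤ) := by
      have : ((n' : ℕ) : ℤ) ∣ (-1 : ℤ) - (P : ℤ) := by
        have : ((n' : ℕ) : ℤ) ∣ ((P + 1 : ℕ) : ℤ) := Int.natCast_dvd_natCast.mpr hdvdn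
        push_cast at this
        obtain ⟨w, hw⟩ := this
        exact ⟨-w, by linarith⟩
      exact Int.modEq_iff_dvd.mpr this
    have hJn' : jacobiSym ((n' : ℕ) : ℤ) P = 1 := by
      rw [jacobiSym.quadratic_reciprocity_one_mod_four' (by rw [Nat.odd_iff]; omega) hP4]
      rw [jacobiSym.mod_left' hJP]
      rw [jacobiSym.at_neg_one (by rw [Nat.odd_iff]; omega)]
      exact ZMod.χ₄_nat_one_mod_four (by omega)
    have hJ2 : jacobiSym (2 : ℤ) P = 1 := by
      rw [jacobiSym.at_two hPodd, ZMod.χ₈_nat_eq_if_mod_eight]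
      have h2 : P % 2 = 1 := by omega
      rw [h2, hP8]
      norm_num
    have hJm1 : jacobiSym (-1 : ℤ) P = 1 := by
      rw [jacobiSym.at_neg_one hPodd]
      exact ZMod.χ₄_nat_one_mod_four hP4
    -- the target modulus N
    set N : ℤ := 2^ε * (n' : ℤ) with hN
    have hNpos : 0 < N := by positivity
    have hJN : jacobiSym (-N) P = 1 := by
      have : -N = (-1) * (2^ε * (n' : ℤ)) := by rw [hN]; ring
      rw [this, jacobiSym.mul_left, jacobiSym.mul_left, hJm1]
      have h2pow : jacobiSym ((2:ℤ)^ε) P = 1 := by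
        interval_cases ε
        · simp
        · simpa using hJ2
      rw [h2pow, hJn']
      norm_num
    have hsq : IsSquare ((((-N) : ℤ)) : ZMod P) := ZMod.isSquare_of_jacobiSym_eq_one hJN
    -- construct b
    have hPltN : N < P := by
      have : (n' : ℤ) ≤ N ∧ N ≤ 2 * n' := by
        constructor
        · rw [hN]; nlinarith [pow_pos (by norm_num : (0:ℤ) < 2) ε, Int.natCast_nonneg n']
        · rw [hN]
          interval_cases ε <;> push_cast <;> nlinarith [Int.natCast_nonneg n']
      have hPbig : (M : ℤ) < P := by exact_mod_cast hPgt
      have : (2 * n' : ℤ) < M := by rw [hM]; push_cast; omega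
      omega
    have hNmod0 : ((N : ℤ) : ZMod P) ≠ 0 := by
      rw [Ne, ZMod.intCast_zmod_eq_zero_iff_dvd]
      intro hdvd
      have := Int.le_of_dvd hNpos hdvd
      omega
    obtain ⟨β, hβ⟩ := hsq
    set b0 : ZMod P := β * ((N : ℤ) : ZMod P)⁻¹ with hb0
    have hb0sq : ((N : ℤ) : ZMod P) * b0^2 = -1 := by
      have hβ2 : β^2 = -((N : ℤ) : ZMod P) := by
        rw [sq, ← hβ]; push_cast; ring
      rw [hb0]
      field_simp
      rw [hβ2]
    set bz : ℤ := (b0.val : ℤ) with hbz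
    have hbcast : ((bz : ℤ) : ZMod P) = b0 := by
      rw [hbz]; push_cast; exact ZMod.natCast_val b0 |>.trans (ZMod.cast_id _ _)
    have hPdvd : (P : ℤ) ∣ 1 + N * bz^2 := by
      rw [← ZMod.intCast_zmod_eq_zero_iff_dvd]
      push_cast
      rw [hbcast, hb0sq]
      ring
    obtain ⟨Cc, hCc⟩ := hPdvd
    have hNdvd : N ∣ (1 + (P:ℤ)) := by
      have hh : ((2^ε * n' : ℕ) : ℤ) ∣ ((P + 1 : ℕ) : ℤ) := by
        apply Int.natCast_dvd_natCast.mpr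
        interval_cases ε
        · simpa using hdvdn
        · simpa using hdvd2n
      push_cast at hh
      rw [hN, add_comm]
      exact hh
    obtain ⟨A, hA⟩ := hNdvd
    have hPpos : (0:ℤ) < (P:ℤ) := by exact_mod_cast hPprime.pos
    have hm2 : 0 < N * A - 1^2 := by
      have : N * A - 1^2 = (P:ℤ) := by rw [← hA]; ring
      rw [this]; exact hPpos
    have hdet : d3 N A Cc 1 0 bz = 1 := by
      unfold d3
      linear_combination Cc * hA.symm - hCc
    obtain ⟨X, Y, Z, hXYZ⟩ := main3 N.toNat N A Cc 1 0 bz rfl hNpos hm2 hdet 1 0 0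
    refine ⟨X, Y, Z, ?_⟩
    rw [hXYZ]
    show Q3 N A Cc 1 0 bz 1 0 0 = N
    unfold Q3; ring



end ThreeSq


/-- For all positive integers `r, m`, the homogeneous equation
`y² + z² + w² = 2rm((4m+1)t² - x²)` has a nontrivial integer solution. -/
theorem stmt_9 (r m : ℕ) (hr : 0 < r) (hm : 0 < m) :
    ∃ x y z w t : ℤ, ¬ (x = 0 ∧ y = 0 ∧ z = 0 ∧ w = 0 ∧ t = 0) ∧
      y ^ 2 + z ^ 2 + w ^ 2 = 2 * r * m * ((4 * m + 1) * t ^ 2 - x ^ 2) := by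
  set M := 2 * r * m with hMdef
  have hM0 : M ≠ 0 := by positivity
  obtain ⟨E, ω, hωnd, hMeq⟩ := Nat.exists_eq_pow_mul_and_not_dvd hM0 2 (by norm_num)
  have hω2 : ω % 2 = 1 := by omega
  have hω8 : ω % 8 = 1 ∨ ω % 8 = 3 ∨ ω % 8 = 5 ∨ ω % 8 = 7 := by omega
  -- select (t, x, D)
  obtain ⟨t, x, D, htnz, hDval, hD8⟩ :
      ∃ (t x : ℤ) (D : ℕ), t ≠ 0 ∧ (4*(m:ℤ)+1)*t^2 - x^2 = (D : ℤ) ∧ (ω * D) % 8 = 1 := by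
    have hm2 := Nat.mod_two_eq_zero_or_one m
    rcases hω8 with h | h | h | h
    · rcases hm2 with hme | hmo
      · refine ⟨1, 0, 4*m+1, one_ne_zero, by push_cast; ring, ?_⟩
        have h1 : (4*m+1) % 8 = 1 := by omega
        rw [Nat.mul_mod, h, h1]
      · refine ⟨1, 2, 4*m-3, one_ne_zero, ?_, ?_⟩
        · rw [Nat.cast_sub (by omega)]; push_cast; ring
        · have h1 : (4*m-3) % 8 = 1 := by omega
          rw [Nat.mul_mod, h, h1]
    · refine ⟨2, 1, 16*m+3, two_ne_zero, by push_cast; ring, ?_⟩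
      have h1 : (16*m+3) % 8 = 3 := by omega
      rw [Nat.mul_mod, h, h1]
    · rcases hm2 with hme | hmo
      · refine ⟨1, 2, 4*m-3, one_ne_zero, ?_, ?_⟩
        · rw [Nat.cast_sub (by omega)]; push_cast; ring
        · have h1 : (4*m-3) % 8 = 5 := by omega
          rw [Nat.mul_mod, h, h1]
      · refine ⟨1, 0, 4*m+1, one_ne_zero, by push_cast; ring, ?_⟩
        have h1 : (4*m+1) % 8 = 5 := by omega
        rw [Nat.mul_mod, h, h1]
    · refine ⟨4, 1, 64*m+15, four_ne_zero, by push_cast; ring, ?_⟩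
      have h1 : (64*m+15) % 8 = 7 := by omega
      rw [Nat.mul_mod, h, h1]
  set ee := E / 2 with hee
  set ε := E % 2 with hεdef
  have hε : ε ≤ 1 := by omega
  obtain ⟨X, Y, Z, hS⟩ := ThreeSq.core (ω * D) hD8 ε hε
  refine ⟨x, 2^ee * X, 2^ee * Y, 2^ee * Z, t, ?_, ?_⟩
  · rintro ⟨-, -, -, -, ht0⟩
    exact htnz ht0
  · have hpow : (2:ℤ)^(2*ee) * 2^ε = 2^E := by
      rw [← pow_add]; congr 1; omega
    have hMcast : ((M : ℕ) : ℤ) = 2^E * (ω : ℤ) := by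
      rw [hMeq]; push_cast; ring
    have key : 2 * (r:ℤ) * (m:ℤ) * ((4*(m:ℤ)+1)*t^2 - x^2)
        = 2^E * ((ω * D : ℕ) : ℤ) := by
      rw [hDval]
      have h2 : 2 * (r:ℤ) * (m:ℤ) = ((M : ℕ) : ℤ) := by rw [hMdef]; push_cast; ring
      rw [h2, hMcast]
      push_cast; ring
    calc (2^ee * X)^2 + (2^ee * Y)^2 + (2^ee * Z)^2
        = (2:ℤ)^(2*ee) * (X^2 + Y^2 + Z^2) := by ring
      _ = (2:ℤ)^(2*ee) * (2^ε * ((ω*D : ℕ) : ℤ)) := by rw [hS]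
      _ = 2^E * ((ω * D : ℕ) : ℤ) := by rw [← mul_assoc, hpow]
      _ = 2 * (r:ℤ) * (m:ℤ) * ((4*(m:ℤ)+1)*t^2 - x^2) := key.symm
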